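/- Let A_{k₁} be a real n × n^{k₁−1} matrix and A_{k₂} a real n × n^{k₂−1} matrix with k₁, k₂ ≥ 2, let f_{k₁}(x) = A_{k₁} x^{[k₁−1]}, f_{k₂}(x) = A_{k₂} x^{[k₂−1]}, and g(x) = C x with C a real m × n matrix. Then for every x ∈ ℝⁿ, L_{f_{k₂}} L_{f_{k₁}} g(x) = C A_{k₁} B_{k₂k₁} x^{[k₁+k₂−3]}, where B_{k₂k₁} = Σ_{i=1}^{k₁−1} I ⊗ ⋯ ⊗ A_{k₂} ⊗ ⋯ ⊗ I is the sum over i = 1, …, k₁−1 of Kronecker products of k₁−1 factors in which A_{k₂} occupies the i-th factor and all other factors are the n × n identity matrix I. -/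

import Mathlib

open Matrix BigOperators

noncomputable section

/-- Kronecker product of (column) vectors. -/
def vkron {a b : ℕ} (u : Fin a → ℝ) (v : Fin b → ℝ) : Fin (a * b) → ℝ :=
  fun i => u (finProdFinEquiv.symm i).1 * v (finProdFinEquiv.symm i).2

/-- Cast a vector along an equality of dimensions. -/
def castV {a b : ℕ} (h : a = b) (v : Fin a → ℝ) : Fin b → ℝ :=
  fun i => v (Fin.cast h.symm i)

/-- `vpow x m = x ⊗ x ⊗ ⋯ ⊗ x` (`m` factors), the `m`-fold Kronecker power. -/
def vpow {n : ℕ} (x : Fin n → ℝ) : (m : ℕ) → Fin (n ^ m) → ℝ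
  | 0 => fun _ => 1
  | m + 1 => castV (pow_succ' n m).symm (vkron x (vpow x m))

/-- Kronecker product of matrices. -/
def mkron {a b c d : ℕ} (A : Matrix (Fin a) (Fin b) ℝ) (B : Matrix (Fin c) (Fin d) ℝ) :
    Matrix (Fin (a * c)) (Fin (b * d)) ℝ :=
  fun i j =>
    A (finProdFinEquiv.symm i).1 (finProdFinEquiv.symm j).1 *
      B (finProdFinEquiv.symm i).2 (finProdFinEquiv.symm j).2

/-- Cast a matrix along equalities of dimensions. -/
def castM {a b a' b' : ℕ} (ha : a = a') (hb : b = b')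
    (M : Matrix (Fin a) (Fin b) ℝ) : Matrix (Fin a') (Fin b') ℝ :=
  fun i j => M (Fin.cast ha.symm i) (Fin.cast hb.symm j)

/-- `Bmat k N hk A = Σ_{i=1}^{N} I^{⊗(i-1)} ⊗ A ⊗ I^{⊗(N-i)}`, where `A` is `n × n^(k-1)`
and `I` is the `n × n` identity; the result is an `n^N × n^(N+k-2)` matrix. -/
def Bmat {n : ℕ} (k N : ℕ) (hk : 2 ≤ k) (A : Matrix (Fin n) (Fin (n ^ (k - 1))) ℝ) :
    Matrix (Fin (n ^ N)) (Fin (n ^ (N + k - 2))) ℝ :=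
  ∑ i : Fin N,
    castM (by have := i.isLt; rw [← pow_succ', ← pow_add]; congr 1; omega)
      (by have := i.isLt; have := hk; rw [← pow_add, ← pow_add]; congr 1; omega)
      (mkron (1 : Matrix (Fin (n ^ (i : ℕ))) (Fin (n ^ (i : ℕ))) ℝ)
        (mkron A (1 : Matrix (Fin (n ^ (N - 1 - (i : ℕ)))) (Fin (n ^ (N - 1 - (i : ℕ)))) ℝ)))

/-- Lie derivative of an output map along a vector field. -/
def lieD {n m : ℕ} (f : (Fin n → ℝ) → Fin n → ℝ) (φ : (Fin n → ℝ) → Fin m → ℝ) :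
    (Fin n → ℝ) → Fin m → ℝ :=
  fun x => fderiv ℝ φ x (f x)

/-- Iterated Lie derivative `L_f^j φ`. -/
def lieIter {n m : ℕ} (f : (Fin n → ℝ) → Fin n → ℝ) (φ : (Fin n → ℝ) → Fin m → ℝ) :
    ℕ → (Fin n → ℝ) → Fin m → ℝ
  | 0 => φ
  | j + 1 => lieD f (lieIter f φ j)

lemma castV_castV {a b c : ℕ} (h : a = b) (h' : b = c) (u : Fin a → ℝ) :
    castV h' (castV h u) = castV (h.trans h') u := rfl

lemma castV_cancel {a b : ℕ} (h : a = b) (u : Fin a → ℝ) :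
    castV h.symm (castV h u) = u := rfl

lemma vkron_castV_left {a a' b : ℕ} (h : a = a') (u : Fin a → ℝ) (w : Fin b → ℝ) :
    vkron (castV h u) w = castV (by rw [h]) (vkron u w) := rfl

lemma vkron_castV_right {a b b' : ℕ} (h : b = b') (u : Fin a → ℝ) (w : Fin b → ℝ) :
    vkron u (castV h w) = castV (by rw [h]) (vkron u w) := by
  subst h; rfl

lemma vkron_x_vpow {n : ℕ} (x : Fin n → ℝ) (m : ℕ) :
    vkron x (vpow x m) = castV (pow_succ' n m) (vpow x (m + 1)) := rfl

lemma vpow_congr {n : ℕ} (x : Fin n → ℝ) {a b : ℕ} (h : a = b) :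
    vpow x b = castV (by rw [h]) (vpow x a) := by subst h; rfl

lemma vkron_assoc {a b c : ℕ} (u : Fin a → ℝ) (v : Fin b → ℝ) (w : Fin c → ℝ) :
    vkron u (vkron v w) = castV (mul_assoc a b c) (vkron (vkron u v) w) := by
  funext i
  simp only [vkron, castV, finProdFinEquiv_symm_apply, Fin.divNat, Fin.modNat, Fin.coe_cast]
  rw [← mul_assoc]
  have h1 : ∀ k : ℕ, k/(b*c) = k/c/b := fun k => by
    rw [Nat.div_div_eq_div_mul, Nat.mul_comm c b]
  have h2 : ∀ k : ℕ, k%(b*c)/c = k/c%b := fun k => by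
    rw [Nat.mul_comm b c, Nat.mod_mul_right_div_self]
  have h3 : ∀ k : ℕ, k%(b*c)%c = k%c := fun k => Nat.mod_mod_of_dvd _ (dvd_mul_left c b)
  exact congrArg₂ _ (congrArg₂ _ (congrArg u (Fin.ext (h1 i))) (congrArg v (Fin.ext (h2 i))))
    (congrArg w (Fin.ext (h3 i)))

lemma vkron_one_left {b : ℕ} (w : Fin b → ℝ) :
    vkron (fun _ : Fin 1 => (1:ℝ)) w = castV (one_mul b).symm w := by
  funext i
  simp only [vkron, castV, finProdFinEquiv_symm_apply, Fin.divNat, Fin.modNat, Fin.coe_cast]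
  rw [one_mul]
  exact congrArg w (Fin.ext (Nat.mod_eq_of_lt (by simpa using i.isLt)))

lemma vpow_split {n : ℕ} (x : Fin n → ℝ) (a b : ℕ) :
    vkron (vpow x a) (vpow x b) = castV (pow_add n a b) (vpow x (a + b)) := by
  induction a with
  | zero =>
      show vkron (fun _ : Fin 1 => (1:ℝ)) (vpow x b) = _
      rw [vkron_one_left,
        vpow_congr x (show b = 0 + b by omega), castV_castV]
      rfl
  | succ a ih =>
      have e1 : vkron (vpow x (a+1)) (vpow x b)
          = castV (by rw [pow_succ']) (vkron (vkron x (vpow x a)) (vpow x b)) := by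
        rw [show vpow x (a+1) = castV (pow_succ' n a).symm (vkron x (vpow x a)) from rfl,
          vkron_castV_left]
      rw [e1, show vkron (vkron x (vpow x a)) (vpow x b)
            = castV (mul_assoc n (n^a) (n^b)).symm (vkron x (vkron (vpow x a) (vpow x b))) from
          by rw [vkron_assoc]; rfl,
        ih, vkron_castV_right, vkron_x_vpow, castV_castV, castV_castV, castV_castV,
        vpow_congr x (show (a+b)+1 = (a+1)+b by omega), castV_castV]

lemma vpow_split₂ {n : ℕ} (x : Fin n → ℝ) (a b : ℕ) :
    vpow x (a + b) = castV (pow_add n a b).symm (vkron (vpow x a) (vpow x b)) := by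
  rw [vpow_split]; rfl

lemma castM_mulVec {a b a' b' : ℕ} (ha : a = a') (hb : b = b')
    (M : Matrix (Fin a) (Fin b) ℝ) (v : Fin b → ℝ) :
    (castM ha hb M).mulVec (castV hb v) = castV ha (M.mulVec v) := by
  subst ha; subst hb
  funext i
  simp only [castM, castV, Matrix.mulVec, dotProduct]
  rfl

lemma mkron_mulVec {a b c d : ℕ} (A : Matrix (Fin a) (Fin b) ℝ) (B : Matrix (Fin c) (Fin d) ℝ)
    (u : Fin b → ℝ) (v : Fin d → ℝ) :
    (mkron A B).mulVec (vkron u v) = vkron (A.mulVec u) (B.mulVec v) := by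
  funext i
  simp only [Matrix.mulVec, dotProduct, vkron, mkron]
  rw [← Equiv.sum_comp finProdFinEquiv
    (fun j => (A (finProdFinEquiv.symm i).1 (finProdFinEquiv.symm j).1 *
      B (finProdFinEquiv.symm i).2 (finProdFinEquiv.symm j).2) *
      (u (finProdFinEquiv.symm j).1 * v (finProdFinEquiv.symm j).2))]
  simp only [Equiv.symm_apply_apply]
  rw [Fintype.sum_prod_type, Finset.sum_mul_sum]
  apply Finset.sum_congr rfl
  intro p _
  apply Finset.sum_congr rfl
  intro q _
  ring

lemma vkron_sum_right {a b : ℕ} {ι : Type*} (u : Fin a → ℝ) (s : Finset ι)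
    (f : ι → Fin b → ℝ) :
    vkron u (∑ i ∈ s, f i) = ∑ i ∈ s, vkron u (f i) := by
  funext j
  simp [vkron, Finset.sum_apply, Finset.mul_sum]

lemma castV_add {a b : ℕ} (h : a = b) (u v : Fin a → ℝ) :
    castV h (u + v) = castV h u + castV h v := rfl

lemma castV_sum {a b : ℕ} {ι : Type*} (h : a = b) (s : Finset ι) (f : ι → Fin a → ℝ) :
    castV h (∑ i ∈ s, f i) = ∑ i ∈ s, castV h (f i) := by
  funext j
  simp [castV, Finset.sum_apply]

def kronB {a b : ℕ} : (Fin a → ℝ) →L[ℝ] (Fin b → ℝ) →L[ℝ] (Fin (a * b) → ℝ) :=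
  LinearMap.toContinuousLinearMap
    { toFun := fun u => LinearMap.toContinuousLinearMap
        { toFun := fun v => vkron u v
          map_add' := fun v w => by funext i; simp [vkron, mul_add]
          map_smul' := fun c v => by funext i; simp [vkron]; ring }
      map_add' := fun u w => by
        ext v i
        simp [vkron, add_mul]
      map_smul' := fun c u => by
        ext v i
        simp [vkron]
        ring }

@[simp] lemma kronB_apply {a b : ℕ} (u : Fin a → ℝ) (v : Fin b → ℝ) :
    kronB u v = vkron u v := rfl

def castVL {a b : ℕ} (h : a = b) : (Fin a → ℝ) →L[ℝ] (Fin b → ℝ) :=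
  LinearMap.toContinuousLinearMap
    { toFun := fun v => castV h v
      map_add' := fun v w => rfl
      map_smul' := fun c v => rfl }

@[simp] lemma castVL_apply {a b : ℕ} (h : a = b) (v : Fin a → ℝ) :
    castVL h v = castV h v := rfl

def mulVecL {m n : ℕ} (M : Matrix (Fin m) (Fin n) ℝ) : (Fin n → ℝ) →L[ℝ] (Fin m → ℝ) :=
  LinearMap.toContinuousLinearMap M.mulVecLin

@[simp] lemma mulVecL_apply {m n : ℕ} (M : Matrix (Fin m) (Fin n) ℝ) (v : Fin n → ℝ) :
    mulVecL M v = M.mulVec v := rfl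

/-- The key dimension fact for the `i`-th term. -/

lemma dim_key {n N : ℕ} (i : Fin N) : n ^ (i : ℕ) * (n * n ^ (N - 1 - (i : ℕ))) = n ^ N := by
  have := i.isLt
  rw [← pow_succ', ← pow_add]
  congr 1
  omega

/-- derivative of `vpow` as a continuous linear map -/

def dvpowL {n : ℕ} (x : Fin n → ℝ) (N : ℕ) : (Fin n → ℝ) →L[ℝ] (Fin (n ^ N) → ℝ) :=
  ∑ i : Fin N,
    (castVL (dim_key i)).comp
      ((kronB (vpow x (i : ℕ))).comp ((kronB.flip) (vpow x (N - 1 - (i : ℕ)))))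

lemma dvpowL_apply {n : ℕ} (x : Fin n → ℝ) (N : ℕ) (v : Fin n → ℝ) :
    dvpowL x N v = ∑ i : Fin N,
      castV (dim_key i) (vkron (vpow x (i : ℕ)) (vkron v (vpow x (N - 1 - (i : ℕ))))) := by
  simp [dvpowL]

lemma hasFDerivAt_vpow {n : ℕ} (x : Fin n → ℝ) (N : ℕ) :
    HasFDerivAt (fun y => vpow y N) (dvpowL x N) x := by
  induction N with
  | zero =>
      have : dvpowL x 0 = 0 := by simp [dvpowL]; rfl
      rw [this]
      exact hasFDerivAt_const _ _
  | succ N ih =>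
      have h1 : HasFDerivAt (fun y : Fin n → ℝ => kronB y (vpow y N))
          ((kronB x).comp (dvpowL x N) +
            (kronB (a := n) (b := n ^ N)).flip (vpow x N)) x :=
        kronB.hasFDerivAt.clm_apply ih
      have h2 := ((castVL (pow_succ' n N).symm).hasFDerivAt).comp x h1
      have e : (⇑(castVL (pow_succ' n N).symm) ∘ fun y : Fin n → ℝ => kronB y (vpow y N))
          = fun y => vpow y (N + 1) := rfl
      rw [e] at h2
      refine h2.congr_fderiv (Eq.symm ?_)
      apply ContinuousLinearMap.ext; intro v
      simp only [ContinuousLinearMap.comp_apply, ContinuousLinearMap.add_apply,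
        ContinuousLinearMap.flip_apply, kronB_apply, castVL_apply, dvpowL_apply]
      rw [Fin.sum_univ_succ, vkron_sum_right, castV_add, castV_sum]
      refine Eq.trans (add_comm _ _) ?_
      congr 1
      · apply Finset.sum_congr rfl
        intro i _
        show castV _ (vkron (vpow x ((i:ℕ)+1)) (vkron v (vpow x (N + 1 - 1 - ((i:ℕ)+1))))) = _
        rw [vpow_congr x (show N - 1 - (i:ℕ) = N + 1 - 1 - ((i:ℕ)+1) by omega),
          vkron_castV_right, vkron_castV_right, castV_castV]
        conv_rhs => rw [vkron_castV_right, vkron_assoc, vkron_x_vpow, vkron_castV_left,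
          castV_castV, castV_castV, castV_castV]
      · show castV _ (vkron (fun _ : Fin 1 => (1:ℝ)) (vkron v (vpow x (N + 1 - 1 - 0)))) = _
        rw [vkron_one_left]
        rfl

lemma castM_castM {a b c a' b' c' : ℕ} (ha : a = a') (hb : b = b') (ha' : a' = c) (hb' : b' = c')
    (M : Matrix (Fin a) (Fin b) ℝ) :
    castM ha' hb' (castM ha hb M) = castM (ha.trans ha') (hb.trans hb') M := rfl

lemma castM_sum {a b a' b' : ℕ} {ι : Type*} (ha : a = a') (hb : b = b') (s : Finset ι)
    (f : ι → Matrix (Fin a) (Fin b) ℝ) :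
    castM ha hb (∑ i ∈ s, f i) = ∑ i ∈ s, castM ha hb (f i) := by
  funext i j
  simp [castM, Matrix.sum_apply]

lemma sum_mulVec {a b : ℕ} {ι : Type*} (s : Finset ι) (f : ι → Matrix (Fin a) (Fin b) ℝ)
    (v : Fin b → ℝ) :
    (∑ i ∈ s, f i).mulVec v = ∑ i ∈ s, (f i).mulVec v := by
  funext i
  simp only [Matrix.mulVec, dotProduct, Finset.sum_apply, Matrix.sum_apply, Finset.sum_mul]
  rw [Finset.sum_comm]

/-- For `f_{k₁}(x) = A_{k₁} x^{[k₁-1]}`, `f_{k₂}(x) = A_{k₂} x^{[k₂-1]}`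
(`k₁, k₂ ≥ 2`) and `g(x) = C x`,
`L_{f_{k₂}} L_{f_{k₁}} g(x) = C A_{k₁} B_{k₂k₁} x^{[k₁+k₂-3]}` with
`B_{k₂k₁} = Σ_{i=1}^{k₁-1} I ⊗ ⋯ ⊗ A_{k₂} ⊗ ⋯ ⊗ I` (`k₁-1` Kronecker factors, `A_{k₂}` in
the `i`-th factor). -/
theorem mixed_lie_derivative_two (n k₁ k₂ m : ℕ) (hk₁ : 2 ≤ k₁) (hk₂ : 2 ≤ k₂)
    (A₁ : Matrix (Fin n) (Fin (n ^ (k₁ - 1))) ℝ) (A₂ : Matrix (Fin n) (Fin (n ^ (k₂ - 1))) ℝ)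
    (C : Matrix (Fin m) (Fin n) ℝ) (x : Fin n → ℝ) :
    lieD (fun y => A₂.mulVec (vpow y (k₂ - 1)))
        (lieD (fun y => A₁.mulVec (vpow y (k₁ - 1))) (fun y => C.mulVec y)) x =
      (C * A₁ * castM rfl (by congr 1; omega) (Bmat k₂ (k₁ - 1) hk₂ A₂)).mulVec
        (vpow x (k₁ + k₂ - 3)) := by
  -- inner Lie derivative
  have inner_eq : lieD (fun y => A₁.mulVec (vpow y (k₁ - 1))) (fun y => C.mulVec y)
      = fun y => (C * A₁).mulVec (vpow y (k₁ - 1)) := by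
    funext y
    show fderiv ℝ (fun z => C.mulVec z) y (A₁.mulVec (vpow y (k₁ - 1))) = _
    rw [show (fun z : Fin n → ℝ => C.mulVec z) = ⇑(mulVecL C) from rfl,
      ContinuousLinearMap.fderiv]
    show C.mulVec (A₁.mulVec (vpow y (k₁ - 1))) = _
    rw [Matrix.mulVec_mulVec]
  rw [inner_eq]
  -- outer Lie derivative
  have houter : HasFDerivAt (fun y => (C * A₁).mulVec (vpow y (k₁ - 1)))
      ((mulVecL (C * A₁)).comp (dvpowL x (k₁ - 1))) x := by
    exact (mulVecL (C * A₁)).hasFDerivAt.comp x (hasFDerivAt_vpow x (k₁ - 1))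
  show fderiv ℝ (fun y => (C * A₁).mulVec (vpow y (k₁ - 1))) x (A₂.mulVec (vpow x (k₂ - 1))) = _
  rw [houter.fderiv]
  show (C * A₁).mulVec (dvpowL x (k₁ - 1) (A₂.mulVec (vpow x (k₂ - 1)))) = _
  conv_rhs => rw [← Matrix.mulVec_mulVec]
  apply congrArg
  rw [dvpowL_apply, Bmat, castM_sum, sum_mulVec]
  apply Finset.sum_congr rfl
  intro i _
  rw [castM_castM]
  rw [vpow_congr x (show (i:ℕ) + ((k₂-1) + ((k₁ - 1) - 1 - (i:ℕ))) = k₁ + k₂ - 3 by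
      have := i.isLt; omega),
    vpow_split₂ x (↑i) (k₂ - 1 + (k₁ - 1 - 1 - ↑i)), vpow_split₂ x (k₂ - 1) (k₁ - 1 - 1 - ↑i),
    vkron_castV_right, castV_castV, castV_castV]
  rw [castM_mulVec, mkron_mulVec, mkron_mulVec, Matrix.one_mulVec, Matrix.one_mulVec]


end
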